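/- Under complete randomization with treated proportion π₁ and H a projection hat matrix annihilating the constant vector (so ∑_j H_{i,j} y_j(1) summed over all i,j vanishes: 𝟙ᵀHv = 0), the bias of the HOIF-motivated adjusted estimator τ̂_{adj,2} = τ̂_unadj − IF̂₂₂ for the finite-population mean τ̄ = (1/n)∑ y_i(1) equals bias(τ̂_{adj,2}) = −(π₀/π₁)(1/(n(n−1))) ∑_{i=1}^n H_{i,i} y_i(1). -/

import Mathlib

open Finset

noncomputable def creExp (n n₁ : ℕ) (f : Finset (Fin n) → ℝ) : ℝ :=
  (∑ A ∈ Finset.powersetCard n₁ (Finset.univ : Finset (Fin n)), f A) /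
    ((Finset.powersetCard n₁ (Finset.univ : Finset (Fin n))).card : ℝ)

noncomputable def ind {n : ℕ} (i : Fin n) (A : Finset (Fin n)) : ℝ := if i ∈ A then 1 else 0

lemma aux_count {α : Type*} [DecidableEq α] (s t : Finset α) (k : ℕ) (hts : t ⊆ s)
    (htk : t.card ≤ k) :
    ((Finset.powersetCard k s).filter (fun A => t ⊆ A)).card
      = (s.card - t.card).choose (k - t.card) := by
  rw [← Finset.card_sdiff_of_subset hts, ← Finset.card_powersetCard (k - t.card) (s \ t)]
  apply Finset.card_nbij' (fun A => A \ t) (fun B => B ∪ t)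
  · intro A hA
    simp only [Finset.mem_coe, Finset.mem_filter, Finset.mem_powersetCard] at hA ⊢
    obtain ⟨⟨hAs, hAk⟩, htA⟩ := hA
    refine ⟨Finset.sdiff_subset_sdiff hAs le_rfl, ?_⟩
    rw [Finset.card_sdiff_of_subset htA, hAk]
  · intro B hB
    simp only [Finset.mem_coe, Finset.mem_filter, Finset.mem_powersetCard] at hB ⊢
    obtain ⟨hBs, hBk⟩ := hB
    have hd : Disjoint B t := Finset.disjoint_of_subset_left hBs Finset.sdiff_disjoint
    refine ⟨⟨?_, ?_⟩, Finset.subset_union_right⟩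
    · exact Finset.union_subset (hBs.trans (Finset.sdiff_subset)) hts
    · rw [Finset.card_union_of_disjoint hd, hBk, Nat.sub_add_cancel htk]
  · intro A hA
    simp only [Finset.mem_coe, Finset.mem_filter] at hA
    exact Finset.sdiff_union_of_subset hA.2
  · intro B hB
    simp only [Finset.mem_coe, Finset.mem_powersetCard] at hB
    exact Finset.union_sdiff_cancel_right
      (Finset.disjoint_of_subset_left hB.1 Finset.sdiff_disjoint)

lemma sum_ind_one {n n₁ : ℕ} (hn : 1 ≤ n₁) (i : Fin n) :
    ∑ A ∈ Finset.powersetCard n₁ (Finset.univ : Finset (Fin n)), ind i A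
      = ((n - 1).choose (n₁ - 1) : ℝ) := by
  unfold ind
  rw [Finset.sum_boole]
  have : (Finset.powersetCard n₁ (Finset.univ : Finset (Fin n))).filter (fun A => i ∈ A)
      = (Finset.powersetCard n₁ (Finset.univ : Finset (Fin n))).filter (fun A => {i} ⊆ A) := by
    apply Finset.filter_congr; intro A _; simp
  rw [this, aux_count _ _ _ (by simp) (by simpa using hn)]
  simp

lemma sum_ind_two {n n₁ : ℕ} (hn : 2 ≤ n₁) {i j : Fin n} (hij : i ≠ j) :
    ∑ A ∈ Finset.powersetCard n₁ (Finset.univ : Finset (Fin n)), ind i A * ind j A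
      = ((n - 2).choose (n₁ - 2) : ℝ) := by
  have hcard : ({i, j} : Finset (Fin n)).card = 2 := by
    rw [Finset.card_insert_of_notMem (by simpa using hij), Finset.card_singleton]
  have : ∀ A : Finset (Fin n), ind i A * ind j A = if ({i, j} : Finset (Fin n)) ⊆ A then (1:ℝ) else 0 := by
    intro A
    unfold ind
    by_cases hi : i ∈ A <;> by_cases hj : j ∈ A <;>
      simp [hi, hj, Finset.insert_subset_iff]
  simp_rw [this]
  rw [Finset.sum_boole]
  rw [aux_count _ _ _ (by simp) (by rw [hcard]; exact hn)]
  simp [hcard]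

lemma sum_ind_two_one {n : ℕ} {i j : Fin n} (hij : i ≠ j) :
    ∑ A ∈ Finset.powersetCard 1 (Finset.univ : Finset (Fin n)), ind i A * ind j A = 0 := by
  apply Finset.sum_eq_zero
  intro A hA
  rw [Finset.mem_powersetCard] at hA
  unfold ind
  by_cases hi : i ∈ A
  · by_cases hj : j ∈ A
    · exfalso
      apply hij
      have := Finset.card_eq_one.mp hA.2
      obtain ⟨a, rfl⟩ := this
      simp at hi hj; rw [hi, hj]
    · simp [hj]
  · simp [hi]

/-- Under CRE with treated proportion `π₁ = n₁/n`, `π₀ = 1 - π₁`, and `H`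
annihilating constants (`𝟙ᵀ H v = 0` for all `v`), the bias of
`τ̂_{adj,2} = τ̂_unadj - IF̂₂₂` for the finite-population mean `τ̄ = (1/n) ∑ y_i(1)`
equals `-(π₀/π₁)(1/(n(n-1))) ∑ H_{i,i} y_i(1)`. -/
theorem cre_adj2_bias (n n₁ : ℕ) (h0 : 0 < n₁) (h1 : n₁ < n)
    (π₁ π₀ : ℝ) (hπ : π₁ = (n₁ : ℝ) / n) (hπ0 : π₀ = 1 - π₁)
    (H : Matrix (Fin n) (Fin n) ℝ) (y : Fin n → ℝ)
    (hann : ∀ v : Fin n → ℝ, ∑ i, ∑ j, H i j * v j = 0) :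
    creExp n n₁ (fun A =>
        (1 / (n : ℝ)) * ∑ i, ind i A / π₁ * y i
        - (1 / (n : ℝ)) * ∑ i, ∑ j ∈ Finset.univ.erase i,
            (ind i A / π₁ - 1) * H i j * (ind j A * y j / π₁))
      - (∑ i, y i) / (n : ℝ)
    = -(π₀ / π₁) * (1 / ((n : ℝ) * ((n : ℝ) - 1))) * ∑ i, H i i * y i := by
  have hn : 0 < n := h0.trans h1
  have hnR : (0:ℝ) < n := by exact_mod_cast hn
  have hn1R : (0:ℝ) < n₁ := by exact_mod_cast h0
  have hπ1pos : 0 < π₁ := by rw [hπ]; positivity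
  have hπ1 : π₁ ≠ 0 := ne_of_gt hπ1pos
  have hnR1 : (1:ℝ) < (n:ℝ) := by exact_mod_cast (Nat.lt_of_le_of_lt h0 h1)
  have hn1ne : (n:ℝ) - 1 ≠ 0 := by linarith
  set P := Finset.powersetCard n₁ (Finset.univ : Finset (Fin n)) with hP
  set N : ℝ := ((n.choose n₁ : ℕ) : ℝ) with hN
  have hNpos : 0 < N := by
    rw [hN]; exact_mod_cast Nat.choose_pos h1.le
  have hNne : N ≠ 0 := ne_of_gt hNpos
  have hPcard : ((P.card : ℕ) : ℝ) = N := by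
    rw [hP, Finset.card_powersetCard, Finset.card_univ, Fintype.card_fin, hN]
  set K1 : ℝ := (((n - 1).choose (n₁ - 1) : ℕ) : ℝ) with hK1def
  set K2 : ℝ := ((n₁:ℝ) - 1) * K1 / ((n:ℝ) - 1) with hK2def
  have hK1 : (n:ℝ) * K1 = (n₁:ℝ) * N := by
    have hnat := Nat.add_one_mul_choose_eq (n - 1) (n₁ - 1)
    rw [Nat.sub_add_cancel hn, Nat.sub_add_cancel h0]
      at hnat
    rw [hK1def, hN]
    exact_mod_cast (by rw [hnat]; ring : (n : ℕ) * (n-1).choose (n₁-1) = n₁ * n.choose n₁)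
  have hK1' : K1 = (n₁:ℝ) / n * N := by
    field_simp
    linarith [hK1]
  have hS1 : ∀ i : Fin n, ∑ A ∈ P, ind i A = K1 := fun i => sum_ind_one h0 i
  have hS2 : ∀ i j : Fin n, i ≠ j → ∑ A ∈ P, ind i A * ind j A = K2 := by
    intro i j hij
    rcases eq_or_lt_of_le (show 1 ≤ n₁ from h0) with h | h
    · have hn₁ : n₁ = 1 := h.symm
      subst hn₁
      rw [hP, sum_ind_two_one hij, hK2def]
      simp
    · have h2 : 2 ≤ n₁ := h
      rw [hP, sum_ind_two h2 hij, hK2def]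
      have key : ((n:ℝ) - 1) * (((n - 2).choose (n₁ - 2) : ℕ) : ℝ) = ((n₁:ℝ) - 1) * K1 := by
        have hnat := Nat.add_one_mul_choose_eq (n - 2) (n₁ - 2)
        have e1 : n - 2 + 1 = n - 1 := by omega
        have e2 : n₁ - 2 + 1 = n₁ - 1 := by omega
        rw [e1, e2] at hnat
        have hcast : ((n - 1 : ℕ) : ℝ) * (((n - 2).choose (n₁ - 2) : ℕ) : ℝ)
            = (((n - 1).choose (n₁ - 1) : ℕ) : ℝ) * ((n₁ - 1 : ℕ) : ℝ) := by
          exact_mod_cast hnat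
        rw [Nat.cast_sub hn, Nat.cast_sub h0] at hcast
        rw [hK1def]
        push_cast at hcast ⊢
        linarith
      field_simp
      linarith [key]
  have hD : ∑ i, ∑ j ∈ Finset.univ.erase i, H i j * y j = - ∑ i, H i i * y i := by
    have h := hann y
    have hsplit : ∀ i : Fin n, ∑ j, H i j * y j
        = H i i * y i + ∑ j ∈ Finset.univ.erase i, H i j * y j := fun i =>
      (Finset.add_sum_erase Finset.univ (fun j => H i j * y j) (Finset.mem_univ i)).symm
    rw [Finset.sum_congr rfl (fun i _ => hsplit i), Finset.sum_add_distrib] at h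
    linarith
  have h1sum : ∀ i : Fin n, ∑ A ∈ P, ind i A / π₁ * y i = K1 * (y i / π₁) := by
    intro i
    calc ∑ A ∈ P, ind i A / π₁ * y i = ∑ A ∈ P, ind i A * (y i / π₁) :=
          Finset.sum_congr rfl fun A _ => by ring
      _ = (∑ A ∈ P, ind i A) * (y i / π₁) := by rw [Finset.sum_mul]
      _ = K1 * (y i / π₁) := by rw [hS1 i]
  have h2sum : ∀ i j : Fin n, i ≠ j →
      ∑ A ∈ P, (ind i A / π₁ - 1) * H i j * (ind j A * y j / π₁)
        = (K2 / (π₁ * π₁) - K1 / π₁) * (H i j * y j) := by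
    intro i j hij
    calc ∑ A ∈ P, (ind i A / π₁ - 1) * H i j * (ind j A * y j / π₁)
        = ∑ A ∈ P, (ind i A * ind j A * (H i j * y j / (π₁ * π₁))
            - ind j A * (H i j * y j / π₁)) :=
          Finset.sum_congr rfl fun A _ => by ring
      _ = (∑ A ∈ P, ind i A * ind j A) * (H i j * y j / (π₁ * π₁))
            - (∑ A ∈ P, ind j A) * (H i j * y j / π₁) := by
          rw [Finset.sum_sub_distrib, Finset.sum_mul, Finset.sum_mul]
      _ = K2 * (H i j * y j / (π₁ * π₁)) - K1 * (H i j * y j / π₁) := by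
          rw [hS2 i j hij, hS1 j]
      _ = (K2 / (π₁ * π₁) - K1 / π₁) * (H i j * y j) := by ring
  have e1 : ∑ A ∈ P, ∑ i, ind i A / π₁ * y i = K1 / π₁ * ∑ i, y i := by
    rw [Finset.sum_comm]
    rw [Finset.sum_congr rfl (fun i _ => h1sum i), ← Finset.mul_sum, ← Finset.sum_div]
    ring
  have e2 : ∑ A ∈ P, ∑ i, ∑ j ∈ Finset.univ.erase i,
        (ind i A / π₁ - 1) * H i j * (ind j A * y j / π₁)
      = (K2 / (π₁ * π₁) - K1 / π₁) * (- ∑ i, H i i * y i) := by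
    rw [Finset.sum_comm]
    have step : ∀ i : Fin n, ∑ A ∈ P, ∑ j ∈ Finset.univ.erase i,
          (ind i A / π₁ - 1) * H i j * (ind j A * y j / π₁)
        = ∑ j ∈ Finset.univ.erase i, (K2 / (π₁ * π₁) - K1 / π₁) * (H i j * y j) := by
      intro i
      rw [Finset.sum_comm]
      exact Finset.sum_congr rfl fun j hj =>
        h2sum i j (Ne.symm (Finset.mem_erase.mp hj).1)
    rw [Finset.sum_congr rfl (fun i _ => step i)]
    simp_rw [← Finset.mul_sum]
    rw [hD]
  have hsum : ∑ A ∈ P, ((1 / (n : ℝ)) * ∑ i, ind i A / π₁ * y i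
        - (1 / (n : ℝ)) * ∑ i, ∑ j ∈ Finset.univ.erase i,
            (ind i A / π₁ - 1) * H i j * (ind j A * y j / π₁))
      = (1 / (n : ℝ)) * (K1 / π₁ * ∑ i, y i)
        - (1 / (n : ℝ)) * ((K2 / (π₁ * π₁) - K1 / π₁) * (- ∑ i, H i i * y i)) := by
    rw [Finset.sum_sub_distrib, ← Finset.mul_sum, ← Finset.mul_sum, e1, e2]
  simp only [creExp]
  rw [← hP, hsum, hPcard, hK1', hK2def, hK1', hπ0, hπ]
  field_simp
  ring
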